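/- arXiv:2501.09880 — 3 statements merged into one kernel-verified Lean document; each statement's English description precedes it below -/
import Mathlib

section
/- (Marković's theorem) Let u : 𝕌 → (0, +∞) be a positive harmonic function on the open unit disc. Then for all z₁, z₂ ∈ 𝕌, |log(u(z₁)/u(z₂))| ≤ log( (1+ρ)/(1−ρ) ), where ρ = |(z₁ − z₂)/(1 − conj(z₁)·z₂)|. -/
open Metric Complex Set intervalIntegral

noncomputable def gder (u : ℂ → ℝ) (z : ℂ) : ℂ :=
  ((fderiv ℝ (fderiv ℝ u) z 1 1 : ℝ) : ℂ) - ((fderiv ℝ (fderiv ℝ u) z 1 Complex.I : ℝ) : ℂ) * Complex.I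

noncomputable def gfun (u : ℂ → ℝ) (z : ℂ) : ℂ :=
  ((fderiv ℝ u z 1 : ℝ) : ℂ) - ((fderiv ℝ u z Complex.I : ℝ) : ℂ) * Complex.I

noncomputable def ffun (u : ℂ → ℝ) (z : ℂ) : ℂ :=
  ((u 0 : ℝ) : ℂ) + ∫ t in (0:ℝ)..1, z * gfun u ((t:ℝ) * z)

variable {u : ℂ → ℝ}

theorem gfun_hasDerivAt (hreg : ContDiffOn ℝ 2 u (Metric.ball (0:ℂ) 1))
    (hlap : ∀ z ∈ Metric.ball (0:ℂ) 1,
      fderiv ℝ (fun w => fderiv ℝ u w 1) z 1 +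
      fderiv ℝ (fun w => fderiv ℝ u w Complex.I) z Complex.I = 0)
    {z : ℂ} (hz : z ∈ Metric.ball (0:ℂ) 1) :
    HasDerivAt (gfun u) (gder u z) z := by
  have hz2 : ContDiffAt ℝ 2 u z := hreg.contDiffAt (isOpen_ball.mem_nhds hz)
  -- the derivative function
  have hφ : ContDiffAt ℝ 1 (fderiv ℝ u) z := hz2.fderiv_right (by norm_num)
  have hA : HasFDerivAt (fderiv ℝ u) (fderiv ℝ (fderiv ℝ u) z) z :=
    (hφ.differentiableAt (by norm_num)).hasFDerivAt
  set A := fderiv ℝ (fderiv ℝ u) z with hAdef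
  -- symmetry
  have hsymm : ∀ v w : ℂ, A v w = A w v := fun v w =>
    (hz2.isSymmSndFDerivAt (by norm_num)) v w
  -- Laplace
  have hlapz : A 1 1 + A Complex.I Complex.I = 0 := by
    have h := hlap z hz
    have e1 : fderiv ℝ (fun w => fderiv ℝ u w 1) z =
        (ContinuousLinearMap.apply ℝ ℝ (1:ℂ)).comp A := by
      exact ((ContinuousLinearMap.apply ℝ ℝ (1:ℂ)).hasFDerivAt.comp z hA).fderiv
    have e2 : fderiv ℝ (fun w => fderiv ℝ u w Complex.I) z =
        (ContinuousLinearMap.apply ℝ ℝ (Complex.I)).comp A := by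
      exact ((ContinuousLinearMap.apply ℝ ℝ (Complex.I)).hasFDerivAt.comp z hA).fderiv
    rw [e1, e2] at h
    simpa using h
  -- real derivative of gfun
  have h1 : HasFDerivAt (fun w => ((fderiv ℝ u w 1 : ℝ) : ℂ))
      (Complex.ofRealCLM.comp ((ContinuousLinearMap.apply ℝ ℝ (1:ℂ)).comp A)) z :=
    Complex.ofRealCLM.hasFDerivAt.comp z
      ((ContinuousLinearMap.apply ℝ ℝ (1:ℂ)).hasFDerivAt.comp z hA)
  have h2 : HasFDerivAt (fun w => ((fderiv ℝ u w Complex.I : ℝ) : ℂ))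
      (Complex.ofRealCLM.comp ((ContinuousLinearMap.apply ℝ ℝ (Complex.I)).comp A)) z :=
    Complex.ofRealCLM.hasFDerivAt.comp z
      ((ContinuousLinearMap.apply ℝ ℝ (Complex.I)).hasFDerivAt.comp z hA)
  have hg : HasFDerivAt (gfun u)
      (Complex.ofRealCLM.comp ((ContinuousLinearMap.apply ℝ ℝ (1:ℂ)).comp A)
        - (Complex.ofRealCLM.comp ((ContinuousLinearMap.apply ℝ ℝ (Complex.I)).comp A)).smulRight Complex.I) z := by
    have := h1.sub (h2.smul_const Complex.I)
    convert this using 1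
    · rfl
    · rfl
    · funext w
      simp only [gfun, Pi.sub_apply, smul_eq_mul]
  rw [hasDerivAt_iff_hasFDerivAt]
  refine hasFDerivAt_of_restrictScalars ℝ hg ?_
  apply ContinuousLinearMap.ext
  intro h
  have hdecomp : h = h.re • (1:ℂ) + h.im • Complex.I := by
    apply Complex.ext <;> simp
  simp only [ContinuousLinearMap.smulRight_apply, ContinuousLinearMap.coe_sub',
    ContinuousLinearMap.coe_comp', Pi.sub_apply, Function.comp_apply,
    ContinuousLinearMap.apply_apply, Complex.ofRealCLM_apply,
    ContinuousLinearMap.one_apply, ContinuousLinearMap.coe_restrictScalars']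
  rw [hdecomp]
  rw [map_add, ContinuousLinearMap.map_smul_of_tower, ContinuousLinearMap.map_smul_of_tower,
    map_add, map_smul, map_smul]
  have hII : A Complex.I Complex.I = - (A 1 1) := by linarith [hlapz]
  simp only [ContinuousLinearMap.add_apply, ContinuousLinearMap.smul_apply, smul_eq_mul,
    hsymm Complex.I 1, hII]
  unfold gder
  rw [← hAdef]
  apply Complex.ext <;>
    simp [Complex.add_re, Complex.add_im, Complex.mul_re, Complex.mul_im, smul_eq_mul] <;>
    ring


theorem gfun_contOn (hreg : ContDiffOn ℝ 2 u (Metric.ball (0:ℂ) 1)) :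
    ContinuousOn (gfun u) (Metric.ball (0:ℂ) 1) := by
  have hφ : ContinuousOn (fderiv ℝ u) (Metric.ball (0:ℂ) 1) :=
    hreg.continuousOn_fderiv_of_isOpen isOpen_ball (by norm_num)
  exact (Complex.continuous_ofReal.comp_continuousOn
      (hφ.clm_apply continuousOn_const)).sub
    ((Complex.continuous_ofReal.comp_continuousOn
      (hφ.clm_apply continuousOn_const)).mul continuousOn_const)

theorem gder_contOn (hreg : ContDiffOn ℝ 2 u (Metric.ball (0:ℂ) 1)) :
    ContinuousOn (gder u) (Metric.ball (0:ℂ) 1) := by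
  have hφ1 : ContDiffOn ℝ 1 (fderiv ℝ u) (Metric.ball (0:ℂ) 1) :=
    hreg.fderiv_of_isOpen isOpen_ball (by norm_num)
  have hA : ContinuousOn (fderiv ℝ (fderiv ℝ u)) (Metric.ball (0:ℂ) 1) :=
    hφ1.continuousOn_fderiv_of_isOpen isOpen_ball le_rfl
  exact (Complex.continuous_ofReal.comp_continuousOn
      ((hA.clm_apply continuousOn_const).clm_apply continuousOn_const)).sub
    ((Complex.continuous_ofReal.comp_continuousOn
      ((hA.clm_apply continuousOn_const).clm_apply continuousOn_const)).mul continuousOn_const)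

-- membership helper
theorem smul_mem_ball {z : ℂ} (hz : z ∈ Metric.ball (0:ℂ) 1) {t : ℝ} (ht : |t| ≤ 1) :
    ((t:ℂ) * z) ∈ Metric.ball (0:ℂ) 1 := by
  simp only [mem_ball, dist_zero_right] at *
  calc ‖(t:ℂ) * z‖ = |t| * ‖z‖ := by simp [norm_mul]
  _ ≤ 1 * ‖z‖ := by
      apply mul_le_mul_of_nonneg_right ht (norm_nonneg _)
  _ < 1 := by simpa using hz

theorem cont_integrand (hreg : ContDiffOn ℝ 2 u (Metric.ball (0:ℂ) 1))
    {z : ℂ} (hz : z ∈ Metric.ball (0:ℂ) 1) {s : Set ℝ} (hs : s ⊆ Icc (-1) 1) :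
    ContinuousOn (fun t : ℝ => z * gfun u ((t:ℝ) * z)) s := by
  apply ContinuousOn.mul continuousOn_const
  apply (gfun_contOn hreg).comp
  · exact ContinuousOn.mul (Complex.continuous_ofReal.continuousOn) continuousOn_const
  · intro t ht
    have := hs ht
    exact smul_mem_ball hz (abs_le.2 ⟨this.1, this.2⟩)

theorem re_ffun (hreg : ContDiffOn ℝ 2 u (Metric.ball (0:ℂ) 1))
    {z : ℂ} (hz : z ∈ Metric.ball (0:ℂ) 1) : (ffun u z).re = u z := by
  have hmem : ∀ t ∈ uIcc (0:ℝ) 1, ((t:ℂ) * z) ∈ Metric.ball (0:ℂ) 1 := by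
    intro t ht
    rw [uIcc_of_le (by norm_num)] at ht
    exact smul_mem_ball hz (abs_le.2 ⟨by linarith [ht.1], ht.2⟩)
  -- derivative of t ↦ u (t z)
  have hu' : ∀ t ∈ uIcc (0:ℝ) 1,
      HasDerivAt (fun s : ℝ => u ((s:ℂ) * z)) ((fderiv ℝ u ((t:ℂ)*z)) z) t := by
    intro t ht
    have hudiff : HasFDerivAt u (fderiv ℝ u ((t:ℂ)*z)) ((t:ℂ)*z) := by
      have := (hreg.contDiffAt (isOpen_ball.mem_nhds (hmem t ht))).differentiableAt (by norm_num)
      exact this.hasFDerivAt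
    have hin : HasDerivAt (fun s : ℝ => (s:ℂ) * z) z t := by
      simpa using (Complex.ofRealCLM.hasDerivAt (x := t)).mul_const z
    exact hudiff.comp_hasDerivAt t hin
  -- FTC
  have hcont : ContinuousOn (fun t : ℝ => (fderiv ℝ u ((t:ℂ)*z)) z) (uIcc (0:ℝ) 1) := by
    have hφ : ContinuousOn (fderiv ℝ u) (Metric.ball (0:ℂ) 1) :=
      hreg.continuousOn_fderiv_of_isOpen isOpen_ball (by norm_num)
    refine ContinuousOn.clm_apply ?_ continuousOn_const
    exact hφ.comp (Complex.continuous_ofReal.continuousOn.mul continuousOn_const) hmem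
  have hFTC : (∫ t in (0:ℝ)..1, (fderiv ℝ u ((t:ℂ)*z)) z) = u z - u 0 := by
    have := integral_eq_sub_of_hasDerivAt hu' (hcont.intervalIntegrable)
    simpa using this
  -- Re of integral
  have hint : IntervalIntegrable (fun t : ℝ => z * gfun u ((t:ℝ) * z)) MeasureTheory.volume 0 1 := by
    apply (cont_integrand hreg hz ?_).intervalIntegrable
    rw [uIcc_of_le (by norm_num)]
    intro t ht; exact ⟨by linarith [ht.1], ht.2⟩
  have hre : (∫ t in (0:ℝ)..1, z * gfun u ((t:ℝ) * z)).re
      = ∫ t in (0:ℝ)..1, (z * gfun u ((t:ℝ)*z)).re := by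
    have := (Complex.reCLM.intervalIntegral_comp_comm hint).symm
    simpa using this
  have hptwise : ∀ t : ℝ, (z * gfun u ((t:ℝ)*z)).re = (fderiv ℝ u ((t:ℂ)*z)) z := by
    intro t
    have hdec : z = z.re • (1:ℂ) + z.im • Complex.I := by
      apply Complex.ext <;> simp
    rw [show (fderiv ℝ u ((t:ℂ)*z)) z = (fderiv ℝ u ((t:ℂ)*z)) (z.re • (1:ℂ) + z.im • Complex.I) by rw [← hdec]]
    rw [map_add, map_smul, map_smul]
    unfold gfun
    simp [Complex.mul_re, smul_eq_mul]
  unfold ffun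
  rw [Complex.add_re, hre]
  simp only [hptwise]
  rw [hFTC]
  simp

theorem ffun_hasDerivAt (hreg : ContDiffOn ℝ 2 u (Metric.ball (0:ℂ) 1))
    (hlap : ∀ z ∈ Metric.ball (0:ℂ) 1,
      fderiv ℝ (fun w => fderiv ℝ u w 1) z 1 +
      fderiv ℝ (fun w => fderiv ℝ u w Complex.I) z Complex.I = 0)
    {z₀ : ℂ} (hz₀ : z₀ ∈ Metric.ball (0:ℂ) 1) :
    HasDerivAt (ffun u) (gfun u z₀) z₀ := by
  obtain ⟨M, hM⟩ := (isCompact_closedBall (0:ℂ) ((1 + ‖z₀‖)/2)).exists_bound_of_continuousOn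
    ((gfun_contOn hreg).mono (by
      intro w hw
      simp only [Metric.mem_closedBall, dist_zero_right] at hw
      simp only [Metric.mem_ball, dist_zero_right]
      have : ‖z₀‖ < 1 := by simpa using hz₀
      linarith))
  obtain ⟨N, hN⟩ := (isCompact_closedBall (0:ℂ) ((1 + ‖z₀‖)/2)).exists_bound_of_continuousOn
    ((gder_contOn hreg).mono (by
      intro w hw
      simp only [Metric.mem_closedBall, dist_zero_right] at hw
      simp only [Metric.mem_ball, dist_zero_right]
      have : ‖z₀‖ < 1 := by simpa using hz₀
      linarith))
  have hz1 : ‖z₀‖ < 1 := by simpa using hz₀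
  set ε : ℝ := (1 - ‖z₀‖)/2 with hε
  have hεpos : 0 < ε := by linarith
  set r : ℝ := (1 + ‖z₀‖)/2 with hr
  have hr1 : r < 1 := by rw [hr]; linarith
  have hrsub : Metric.closedBall (0:ℂ) r ⊆ Metric.ball (0:ℂ) 1 := by
    intro w hw
    simp only [Metric.mem_closedBall, dist_zero_right] at hw
    simp only [Metric.mem_ball, dist_zero_right]
    linarith
  have hballr : ∀ x ∈ Metric.ball z₀ ε, ‖x‖ ≤ r := by
    intro x hx
    simp only [Metric.mem_ball] at hx
    have : ‖x - z₀‖ < ε := by rwa [← dist_eq_norm]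
    calc ‖x‖ = ‖(x - z₀) + z₀‖ := by ring_nf
    _ ≤ ‖x - z₀‖ + ‖z₀‖ := norm_add_le _ _
    _ ≤ r := by rw [hr, hε] at *; linarith
  have htx : ∀ t ∈ Set.uIoc (0:ℝ) 1, ∀ x ∈ Metric.ball z₀ ε,
      ((t:ℂ) * x) ∈ Metric.closedBall (0:ℂ) r := by
    intro t ht x hx
    rw [Set.uIoc_of_le (by norm_num)] at ht
    simp only [Metric.mem_closedBall, dist_zero_right]
    calc ‖(t:ℂ) * x‖ = |t| * ‖x‖ := by simp [norm_mul]
    _ ≤ 1 * r := by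
        apply mul_le_mul (abs_le.2 ⟨by linarith [ht.1], ht.2⟩) (hballr x hx)
          (norm_nonneg _) zero_le_one
    _ = r := one_mul r
  have hball01 : ∀ x ∈ Metric.ball z₀ ε, x ∈ Metric.ball (0:ℂ) 1 := by
    intro x hx
    simp only [Metric.mem_ball, dist_zero_right]
    have := hballr x hx
    linarith
  have hM0 : 0 ≤ M := le_trans (norm_nonneg _) (hM 0 (by
    simp only [Metric.mem_closedBall, dist_self]; rw [hr]; positivity))
  have hN0 : 0 ≤ N := le_trans (norm_nonneg _) (hN 0 (by
    simp only [Metric.mem_closedBall, dist_self]; rw [hr]; positivity))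
  -- continuity of F' x on subsets of [-1,1], for x in the unit ball
  have hcontF' : ∀ x ∈ Metric.ball (0:ℂ) 1, ∀ s ⊆ Icc (-1:ℝ) 1,
      ContinuousOn (fun t : ℝ => 1 * gfun u ((t:ℝ) * x) + x * (gder u ((t:ℝ) * x) * (t:ℝ))) s := by
    intro x hx s hs
    have hmap : MapsTo (fun t : ℝ => (t:ℂ) * x) s (Metric.ball (0:ℂ) 1) := by
      intro t ht
      have := hs ht
      exact smul_mem_ball hx (abs_le.2 ⟨this.1, this.2⟩)
    have hc : ContinuousOn (fun t : ℝ => (t:ℂ) * x) s :=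
      Complex.continuous_ofReal.continuousOn.mul continuousOn_const
    exact (continuousOn_const.mul ((gfun_contOn hreg).comp hc hmap)).add
      (continuousOn_const.mul (((gder_contOn hreg).comp hc hmap).mul
        Complex.continuous_ofReal.continuousOn))
  have key := intervalIntegral.hasDerivAt_integral_of_dominated_loc_of_deriv_le
    (F := fun x t => x * gfun u ((t:ℝ) * x))
    (F' := fun x t => 1 * gfun u ((t:ℝ) * x) + x * (gder u ((t:ℝ) * x) * (t:ℝ)))
    (bound := fun _ => M + N) (μ := MeasureTheory.volume) (a := 0) (b := 1) (x₀ := z₀) (s := Metric.ball z₀ ε)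
    (Metric.ball_mem_nhds z₀ hεpos)
    (by
      filter_upwards [Metric.ball_mem_nhds z₀ hεpos] with x hx
      exact ((cont_integrand hreg (hball01 x hx) (by
        rw [Set.uIoc_of_le (by norm_num)]
        intro t ht; exact ⟨by linarith [ht.1], ht.2⟩)).aestronglyMeasurable
        measurableSet_uIoc))
    (by
      apply (cont_integrand hreg (hball01 z₀ (Metric.mem_ball_self hεpos)) ?_).intervalIntegrable
      rw [Set.uIcc_of_le (by norm_num)]
      intro t ht; exact ⟨by linarith [ht.1], ht.2⟩)
    (by
      apply (hcontF' z₀ (hball01 z₀ (Metric.mem_ball_self hεpos)) _ ?_).aestronglyMeasurable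
        measurableSet_uIoc
      rw [Set.uIoc_of_le (by norm_num)]
      intro t ht; exact ⟨by linarith [ht.1], ht.2⟩)
    (by
      apply Filter.Eventually.of_forall
      intro t ht x hx
      have h1 : ‖gfun u ((t:ℂ) * x)‖ ≤ M := hM _ (htx t ht x hx)
      have h2 : ‖gder u ((t:ℂ) * x)‖ ≤ N := hN _ (htx t ht x hx)
      rw [Set.uIoc_of_le (by norm_num)] at ht
      have hx1 : ‖x‖ ≤ 1 := le_trans (hballr x hx) (le_of_lt hr1)
      have ht1 : |t| ≤ 1 := abs_le.2 ⟨by linarith [ht.1], ht.2⟩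
      calc ‖1 * gfun u ((t:ℝ) * x) + x * (gder u ((t:ℝ) * x) * (t:ℝ))‖
          ≤ ‖1 * gfun u ((t:ℝ) * x)‖ + ‖x * (gder u ((t:ℝ) * x) * (t:ℝ))‖ := norm_add_le _ _
      _ = ‖gfun u ((t:ℂ) * x)‖ + ‖x‖ * (‖gder u ((t:ℂ) * x)‖ * |t|) := by
          simp [norm_mul]
      _ ≤ M + N := by
          have hg0 := norm_nonneg (gder u ((t:ℂ) * x))
          have ht0 := abs_nonneg t
          have hx0 := norm_nonneg x
          have hb : ‖x‖ * (‖gder u ((t:ℂ) * x)‖ * |t|) ≤ N := by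
            calc ‖x‖ * (‖gder u ((t:ℂ) * x)‖ * |t|)
                ≤ 1 * (‖gder u ((t:ℂ) * x)‖ * |t|) :=
                  mul_le_mul_of_nonneg_right hx1 (mul_nonneg hg0 ht0)
            _ = ‖gder u ((t:ℂ) * x)‖ * |t| := one_mul _
            _ ≤ N * 1 := mul_le_mul h2 ht1 ht0 hN0
            _ = N := mul_one N
          linarith)
    intervalIntegrable_const
    (by
      apply Filter.Eventually.of_forall
      intro t ht x hx
      have hgd := gfun_hasDerivAt hreg hlap (hrsub (htx t ht x hx))
      have hin : HasDerivAt (fun y : ℂ => (t:ℂ) * y) (t:ℂ) x := by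
        simpa using (hasDerivAt_id x).const_mul (t:ℂ)
      have hcomp := hgd.comp x hin
      exact (hasDerivAt_id x).mul hcomp)
  -- identify the integral of F' z₀ with gfun u z₀
  have hFTC2 : (∫ t in (0:ℝ)..1,
      (1 * gfun u ((t:ℝ) * z₀) + z₀ * (gder u ((t:ℝ) * z₀) * (t:ℝ)))) = gfun u z₀ := by
    have hderivH : ∀ t ∈ uIcc (0:ℝ) 1,
        HasDerivAt (fun s : ℝ => (s:ℂ) * gfun u ((s:ℝ) * z₀))
          (1 * gfun u ((t:ℝ) * z₀) + z₀ * (gder u ((t:ℝ) * z₀) * (t:ℝ))) t := by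
      intro t ht
      rw [Set.uIcc_of_le (by norm_num)] at ht
      have hmem : ((t:ℂ) * z₀) ∈ Metric.ball (0:ℂ) 1 :=
        smul_mem_ball hz₀ (abs_le.2 ⟨by linarith [ht.1], ht.2⟩)
      have hgd := gfun_hasDerivAt hreg hlap hmem
      have hin : HasDerivAt (fun s : ℝ => (s:ℂ) * z₀) z₀ t := by
        simpa using (Complex.ofRealCLM.hasDerivAt (x := t)).mul_const z₀
      have hcomp := (hgd.hasFDerivAt.restrictScalars ℝ).comp_hasDerivAt t hin
      have hcomp' : HasDerivAt (fun s : ℝ => gfun u ((s:ℝ) * z₀)) (z₀ * gder u ((t:ℝ) * z₀)) t := by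
        exact hcomp
      have h1 : HasDerivAt (fun s : ℝ => (s:ℂ)) 1 t := by
        exact Complex.ofRealCLM.hasDerivAt (x := t)
      have := h1.mul hcomp'
      have e : 1 * gfun u ((t:ℝ) * z₀) + z₀ * (gder u ((t:ℝ) * z₀) * (t:ℝ))
          = 1 * gfun u ((t:ℝ) * z₀) + (t:ℂ) * (z₀ * gder u ((t:ℝ) * z₀)) := by ring
      rw [e]
      exact this
    have hintH : IntervalIntegrable
        (fun t : ℝ => 1 * gfun u ((t:ℝ) * z₀) + z₀ * (gder u ((t:ℝ) * z₀) * (t:ℝ)))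
        MeasureTheory.volume 0 1 := by
      apply (hcontF' z₀ (hball01 z₀ (Metric.mem_ball_self hεpos)) _ ?_).intervalIntegrable
      rw [Set.uIcc_of_le (by norm_num)]
      intro t ht; exact ⟨by linarith [ht.1], ht.2⟩
    have := integral_eq_sub_of_hasDerivAt hderivH hintH
    rw [this]
    norm_num
  have hfinal := key.2
  rw [hFTC2] at hfinal
  unfold ffun
  simpa using hfinal


-- key quadratic identity
theorem mob_identity (a z : ℂ) :
    Complex.normSq (1 - (starRingEnd ℂ) a * z) - Complex.normSq (a - z)
      = (1 - Complex.normSq a) * (1 - Complex.normSq z) := by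
  simp only [Complex.normSq_apply, Complex.sub_re, Complex.sub_im, Complex.mul_re,
    Complex.mul_im, Complex.one_re, Complex.one_im, Complex.conj_re, Complex.conj_im]
  ring

theorem mob_den_ne (a z : ℂ) (ha : ‖a‖ < 1) (hz : ‖z‖ < 1) :
    1 - (starRingEnd ℂ) a * z ≠ 0 := by
  intro h
  have h1 : ‖(starRingEnd ℂ) a * z‖ < 1 := by
    rw [norm_mul, Complex.norm_conj]
    nlinarith [norm_nonneg a, norm_nonneg z]
  have h2 : (starRingEnd ℂ) a * z = 1 := by
    have := sub_eq_zero.mp h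
    exact this.symm
  rw [h2] at h1
  simp at h1

theorem mob_mem_ball (a z : ℂ) (ha : ‖a‖ < 1) (hz : ‖z‖ < 1) :
    ‖(a - z) / (1 - (starRingEnd ℂ) a * z)‖ < 1 := by
  rw [norm_div, div_lt_one (by
    have := mob_den_ne a z ha hz
    exact (norm_pos_iff.mpr this))]
  have hid := mob_identity a z
  have h1 : Complex.normSq (a - z) < Complex.normSq (1 - (starRingEnd ℂ) a * z) := by
    have hpos : 0 < (1 - Complex.normSq a) * (1 - Complex.normSq z) := by
      apply mul_pos <;>
      · rw [sub_pos, ← Complex.sq_norm]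
        nlinarith [norm_nonneg a, norm_nonneg z]
    linarith
  have := Real.sqrt_lt_sqrt (Complex.normSq_nonneg _) h1
  simpa [Complex.norm_def] using this

theorem schwarz_pick {f : ℂ → ℂ} (hd : DifferentiableOn ℂ f (Metric.ball 0 1))
    (hm : MapsTo f (Metric.ball 0 1) (Metric.ball 0 1))
    {a z : ℂ} (ha : a ∈ Metric.ball (0:ℂ) 1) (hz : z ∈ Metric.ball (0:ℂ) 1) :
    ‖(f z - f a) / (1 - (starRingEnd ℂ) (f a) * f z)‖ ≤
      ‖(z - a) / (1 - (starRingEnd ℂ) a * z)‖ := by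
  rw [mem_ball, dist_zero_right] at ha hz
  have hfa : ‖f a‖ < 1 := by
    have := hm (by simpa [mem_ball, dist_zero_right] using ha)
    simpa [mem_ball, dist_zero_right] using this
  set c := (starRingEnd ℂ) a with hc
  set d := (starRingEnd ℂ) (f a) with hdd
  set φ : ℂ → ℂ := fun w => (a - w) / (1 - c * w) with hφ
  set ψ : ℂ → ℂ := fun w => (f a - w) / (1 - d * w) with hψ
  have hφmem : ∀ w : ℂ, ‖w‖ < 1 → ‖φ w‖ < 1 := fun w hw =>
    mob_mem_ball a w ha hw
  have hψmem : ∀ w : ℂ, ‖w‖ < 1 → ‖ψ w‖ < 1 := fun w hw =>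
    mob_mem_ball (f a) w hfa hw
  have hφdiff : DifferentiableOn ℂ φ (Metric.ball 0 1) := by
    apply DifferentiableOn.div
    · exact (differentiable_const a).differentiableOn.sub differentiable_id.differentiableOn
    · exact (differentiable_const (1:ℂ)).differentiableOn.sub
        ((differentiable_const c).differentiableOn.mul differentiable_id.differentiableOn)
    · intro x hx
      rw [mem_ball, dist_zero_right] at hx
      exact mob_den_ne a x ha hx
  have hψdiff : DifferentiableOn ℂ ψ (Metric.ball 0 1) := by
    apply DifferentiableOn.div
    · exact (differentiable_const (f a)).differentiableOn.sub differentiable_id.differentiableOn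
    · exact (differentiable_const (1:ℂ)).differentiableOn.sub
        ((differentiable_const d).differentiableOn.mul differentiable_id.differentiableOn)
    · intro x hx
      rw [mem_ball, dist_zero_right] at hx
      exact mob_den_ne (f a) x hfa hx
  -- G = ψ ∘ f ∘ φ
  set G : ℂ → ℂ := fun w => ψ (f (φ w)) with hG
  have hφmaps : MapsTo φ (Metric.ball 0 1) (Metric.ball 0 1) := by
    intro w hw
    rw [mem_ball, dist_zero_right] at *
    exact hφmem w hw
  have hψmaps : MapsTo ψ (Metric.ball 0 1) (Metric.ball 0 1) := by
    intro w hw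
    rw [mem_ball, dist_zero_right] at *
    exact hψmem w hw
  have hGdiff : DifferentiableOn ℂ G (Metric.ball 0 1) :=
    (hψdiff.comp (hd.comp hφdiff hφmaps) (hm.comp hφmaps))
  have hGmaps : MapsTo G (Metric.ball 0 1) (Metric.ball 0 1) :=
    hψmaps.comp (hm.comp hφmaps)
  have hG0 : G 0 = 0 := by
    have : φ 0 = a := by simp [hφ]
    simp [hG, this, hψ]
  -- the point w = φ z, satisfying φ w = z
  have hca : 1 - c * a ≠ 0 := mob_den_ne a a ha ha
  have hcz : 1 - c * z ≠ 0 := mob_den_ne a z ha hz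
  have hden_eq : 1 - c * ((a - z) / (1 - c * z)) = (1 - c * a) / (1 - c * z) := by
    field_simp
    ring
  have hnum_eq : a - (a - z) / (1 - c * z) = z * (1 - c * a) / (1 - c * z) := by
    rw [eq_div_iff hcz, sub_mul, div_mul_cancel₀ _ hcz]
    ring
  have hinv : φ (φ z) = z := by
    rw [hφ]
    simp only
    rw [hden_eq, div_eq_iff (div_ne_zero hca hcz), hnum_eq]
    ring
  have hφz1 : ‖φ z‖ < 1 := hφmem z hz
  have hschwarz := Complex.norm_le_norm_of_mapsTo_ball hGdiff (hGmaps.mono_right ball_subset_closedBall) hG0 hφz1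
  rw [hG] at hschwarz
  simp only at hschwarz
  rw [hinv] at hschwarz
  -- identify both sides
  have lhs_eq : ‖ψ (f z)‖ = ‖(f z - f a) / (1 - d * f z)‖ := by
    rw [hψ]
    simp only
    rw [norm_div, norm_div]
    congr 1
    rw [← norm_neg]
    congr 1
    ring
  have rhs_eq : ‖φ z‖ = ‖(z - a) / (1 - c * z)‖ := by
    rw [hφ]
    simp only
    rw [norm_div, norm_div]
    congr 1
    rw [← norm_neg]
    congr 1
    ring
  rw [lhs_eq, rhs_eq] at hschwarz
  exact hschwarz

theorem sqle {x y : ℝ} (hy : 0 ≤ y) (h : x^2 ≤ y^2) (hx : 0 ≤ x) : x ≤ y := by nlinarith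

theorem hp_den_ne {w v : ℂ} (hw : 0 < w.re) (hv : 0 < v.re) : w + (starRingEnd ℂ) v ≠ 0 := by
  intro h
  have : (w + (starRingEnd ℂ) v).re = 0 := by rw [h]; simp
  rw [Complex.add_re, Complex.conj_re] at this
  linarith

theorem hp_normSq_sub {w v : ℂ} :
    Complex.normSq (w - v) = (w.re - v.re)^2 + (w.im - v.im)^2 := by
  simp [Complex.normSq_apply, Complex.sub_re, Complex.sub_im]; ring

theorem hp_normSq_add {w v : ℂ} :
    Complex.normSq (w + (starRingEnd ℂ) v) = (w.re + v.re)^2 + (w.im - v.im)^2 := by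
  simp [Complex.normSq_apply, Complex.add_re, Complex.add_im, Complex.conj_re, Complex.conj_im]
  ring

theorem hp_lt_one {w v : ℂ} (hw : 0 < w.re) (hv : 0 < v.re) :
    ‖(w - v) / (w + (starRingEnd ℂ) v)‖ < 1 := by
  rw [norm_div, div_lt_one (norm_pos_iff.mpr (hp_den_ne hw hv))]
  have h1 : Complex.normSq (w - v) < Complex.normSq (w + (starRingEnd ℂ) v) := by
    rw [hp_normSq_sub, hp_normSq_add]; nlinarith
  have := Real.sqrt_lt_sqrt (Complex.normSq_nonneg _) h1
  simpa [Complex.norm_def] using this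

theorem hp_key {w v : ℂ} (hw : 0 < w.re) (hv : 0 < v.re) :
    |w.re - v.re| ≤ ‖(w - v) / (w + (starRingEnd ℂ) v)‖ * (w.re + v.re) := by
  rw [norm_div, div_mul_eq_mul_div, le_div_iff₀ (norm_pos_iff.mpr (hp_den_ne hw hv))]
  apply sqle (by positivity) ?_ (by positivity)
  rw [mul_pow, mul_pow, _root_.sq_abs]
  simp only [Complex.sq_norm]
  rw [hp_normSq_sub, hp_normSq_add]
  nlinarith [sq_nonneg (w.im - v.im), mul_pos hw hv, sq_nonneg ((w.re - v.re) * (w.im - v.im)),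
    sq_nonneg ((w.re + v.re) * (w.im - v.im))]


/-- Marković's theorem: a positive harmonic function on the unit disc
contracts the hyperbolic metrics. -/
theorem markovic_theorem (u : ℂ → ℝ)
(hreg : ContDiffOn ℝ 2 u (Metric.ball (0:ℂ) 1))
    (hlap : ∀ z ∈ Metric.ball (0:ℂ) 1,
      fderiv ℝ (fun w => fderiv ℝ u w 1) z 1 +
      fderiv ℝ (fun w => fderiv ℝ u w Complex.I) z Complex.I = 0)
    (hpos : ∀ z ∈ Metric.ball (0:ℂ) 1, 0 < u z)
    (z₁ z₂ : ℂ) (hz₁ : z₁ ∈ Metric.ball (0:ℂ) 1) (hz₂ : z₂ ∈ Metric.ball (0:ℂ) 1) :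
    |Real.log (u z₁ / u z₂)| ≤
      Real.log ((1 + ‖(z₁ - z₂) / (1 - (starRingEnd ℂ) z₁ * z₂)‖) /
        (1 - ‖(z₁ - z₂) / (1 - (starRingEnd ℂ) z₁ * z₂)‖)) := by
  have hz₁' : ‖z₁‖ < 1 := by
    rw [mem_ball, dist_zero_right] at hz₁; exact hz₁
  have hz₂' : ‖z₂‖ < 1 := by
    rw [mem_ball, dist_zero_right] at hz₂; exact hz₂
  have hz₁b : z₁ ∈ Metric.ball (0:ℂ) 1 := by
    rw [mem_ball, dist_zero_right]; exact hz₁'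
  have hz₂b : z₂ ∈ Metric.ball (0:ℂ) 1 := by
    rw [mem_ball, dist_zero_right]; exact hz₂'
  set f := ffun u with hfdef
  have hfre : ∀ z ∈ Metric.ball (0:ℂ) 1, (f z).re = u z := fun z hz => re_ffun hreg hz
  have hfdiff : DifferentiableOn ℂ f (Metric.ball (0:ℂ) 1) := fun z hz =>
    ((ffun_hasDerivAt hreg hlap hz).differentiableAt).differentiableWithinAt
  have hrepos : ∀ z ∈ Metric.ball (0:ℂ) 1, 0 < (f z).re := by
    intro z hz; rw [hfre z hz]; exact hpos z hz
  have hw2 : 0 < (f z₂).re := hrepos z₂ hz₂b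
  set F : ℂ → ℂ := fun z => (f z - f z₂) / (f z + (starRingEnd ℂ) (f z₂)) with hFdef
  have hFdiff : DifferentiableOn ℂ F (Metric.ball (0:ℂ) 1) := by
    apply DifferentiableOn.div
    · exact hfdiff.sub (differentiableOn_const _)
    · exact hfdiff.add (differentiableOn_const _)
    · intro z hz; exact hp_den_ne (hrepos z hz) hw2
  have hFmaps : MapsTo F (Metric.ball (0:ℂ) 1) (Metric.ball (0:ℂ) 1) := by
    intro z hz
    rw [mem_ball, dist_zero_right]
    exact hp_lt_one (hrepos z hz) hw2
  have hFz₂ : F z₂ = 0 := by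
    rw [hFdef]; simp
  have hsp := schwarz_pick hFdiff hFmaps hz₂b hz₁b
  rw [hFz₂] at hsp
  simp only [map_zero, sub_zero, zero_mul, sub_zero, div_one, mul_zero] at hsp
  -- rewrite the RHS of hsp
  have hconj : (starRingEnd ℂ) (1 - (starRingEnd ℂ) z₂ * z₁) = 1 - (starRingEnd ℂ) z₁ * z₂ := by
    rw [map_sub, map_one, map_mul, Complex.conj_conj]; ring
  have hrhseq : ‖(z₁ - z₂) / (1 - (starRingEnd ℂ) z₂ * z₁)‖ =
      ‖(z₁ - z₂) / (1 - (starRingEnd ℂ) z₁ * z₂)‖ := by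
    rw [norm_div, norm_div, ← Complex.norm_conj (1 - (starRingEnd ℂ) z₂ * z₁), hconj]
  rw [hrhseq] at hsp
  set ρ := ‖(z₁ - z₂) / (1 - (starRingEnd ℂ) z₁ * z₂)‖ with hρdef
  have hρ1 : ρ < 1 := mob_mem_ball z₁ z₂ hz₁' hz₂'
  have hρ0 : 0 ≤ ρ := norm_nonneg _
  have ha : 0 < u z₁ := hpos z₁ hz₁b
  have hb : 0 < u z₂ := hpos z₂ hz₂b
  -- key inequality |u z₁ - u z₂| ≤ ρ (u z₁ + u z₂)
  have hkey : |u z₁ - u z₂| ≤ ρ * (u z₁ + u z₂) := by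
    have h1 := hp_key (hrepos z₁ hz₁b) hw2
    rw [hfre z₁ hz₁b, hfre z₂ hz₂b] at h1
    calc |u z₁ - u z₂| ≤ ‖(f z₁ - f z₂) / (f z₁ + (starRingEnd ℂ) (f z₂))‖
        * (u z₁ + u z₂) := h1
    _ ≤ ρ * (u z₁ + u z₂) := by
        apply mul_le_mul_of_nonneg_right _ (by linarith)
        exact hsp
  have h1ρ : (0:ℝ) < 1 - ρ := by linarith
  have hq1 : u z₁ / u z₂ ≤ (1 + ρ) / (1 - ρ) := by
    rw [div_le_div_iff₀ hb h1ρ]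
    have := le_abs_self (u z₁ - u z₂)
    nlinarith
  have hq2 : u z₂ / u z₁ ≤ (1 + ρ) / (1 - ρ) := by
    rw [div_le_div_iff₀ ha h1ρ]
    have := neg_abs_le (u z₁ - u z₂)
    nlinarith
  rw [abs_le]
  constructor
  · have hlog := Real.log_le_log (div_pos hb ha) hq2
    rw [Real.log_div hb.ne' ha.ne'] at hlog
    rw [Real.log_div ha.ne' hb.ne']
    linarith
  · have hlog := Real.log_le_log (div_pos ha hb) hq1
    rw [Real.log_div ha.ne' hb.ne'] at hlog
    rw [Real.log_div ha.ne' hb.ne']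
    linarith
end

section
/- Let 0 ≤ c ≤ 1 and for x ∈ [0,1) set φ_c(x) = (x + c)/(1 + c x). Then for every x ∈ [0,1): Re( (1 + x·φ_c(x)) / (1 − x·φ_c(x)) ) = (1 + x² + 2cx)/(1 − x²) and Re( (1 − x·φ_c(x)) / (1 + x·φ_c(x)) ) = ( (1 + x² + 2cx)/(1 − x²) )⁻¹. In particular, equality holds in both bounds of the strengthened Harnack inequality at real points x for the harmonic functions u₁(z) = Re((1 + zφ_c(z))/(1 − zφ_c(z))) and u₂(z) = Re((1 − zφ_c(z))/(1 + zφ_c(z))), which satisfy u₁(0) = u₂(0) = 1 and |∇u₁(0)| = |∇u₂(0)| = 2c. -/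
open Complex

lemma re_hasGradientAt {f : ℂ → ℂ} {a : ℂ} (hf : HasDerivAt f a 0) :
    HasGradientAt (fun z => (f z).re) ((starRingEnd ℂ) a) 0 := by
  rw [hasGradientAt_iff_hasFDerivAt]
  have hF : HasFDerivAt (fun z => (f z).re)
      (Complex.reCLM.comp
        ((ContinuousLinearMap.smulRight (1 : ℂ →L[ℂ] ℂ) a).restrictScalars ℝ)) 0 :=
    Complex.reCLM.hasFDerivAt.comp 0 (hf.hasFDerivAt.restrictScalars ℝ)
  refine hF.congr_fderiv ?_
  apply ContinuousLinearMap.ext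
  intro v
  simp [InnerProductSpace.toDual_apply_apply, Complex.inner, mul_comm]

/-- Sharpness example: for the harmonic functions
`u₁(z) = Re((1 + zφ_c(z))/(1 - zφ_c(z)))` and
`u₂(z) = Re((1 - zφ_c(z))/(1 + zφ_c(z)))`, where `φ_c(z) = (z+c)/(1+cz)`,
equality holds in both bounds of the strengthened Harnack inequality at real
points, `u₁ 0 = u₂ 0 = 1`, and the gradients at `0` have norm `2c`. -/
theorem sharpness_example (c : ℝ) (hc0 : 0 ≤ c) (hc1 : c ≤ 1)
    (u₁ u₂ : ℂ → ℝ)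
    (hu₁ : ∀ z : ℂ, u₁ z =
      ((1 + z * ((z + (c:ℂ)) / (1 + (c:ℂ) * z))) /
        (1 - z * ((z + (c:ℂ)) / (1 + (c:ℂ) * z)))).re)
    (hu₂ : ∀ z : ℂ, u₂ z =
      ((1 - z * ((z + (c:ℂ)) / (1 + (c:ℂ) * z))) /
        (1 + z * ((z + (c:ℂ)) / (1 + (c:ℂ) * z)))).re) :
    (∀ x : ℝ, 0 ≤ x → x < 1 →
      ((1 + (x:ℂ) * (((x:ℂ) + (c:ℂ)) / (1 + (c:ℂ) * (x:ℂ)))) /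
          (1 - (x:ℂ) * (((x:ℂ) + (c:ℂ)) / (1 + (c:ℂ) * (x:ℂ))))).re =
        (1 + x ^ 2 + 2 * c * x) / (1 - x ^ 2) ∧
      (((1 - (x:ℂ) * (((x:ℂ) + (c:ℂ)) / (1 + (c:ℂ) * (x:ℂ)))) /
          (1 + (x:ℂ) * (((x:ℂ) + (c:ℂ)) / (1 + (c:ℂ) * (x:ℂ))))).re =
        ((1 + x ^ 2 + 2 * c * x) / (1 - x ^ 2))⁻¹)) ∧
    u₁ 0 = 1 ∧ u₂ 0 = 1 ∧
    ‖gradient u₁ 0‖ = 2 * c ∧ ‖gradient u₂ 0‖ = 2 * c := by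
  -- derivative facts at 0
  have hden : (1 : ℂ) + (c:ℂ) * (0:ℂ) ≠ 0 := by norm_num
  have hq : HasDerivAt (fun z : ℂ => (z + (c:ℂ)) / (1 + (c:ℂ) * z))
      ((1 * (1 + (c:ℂ) * 0) - ((0:ℂ) + c) * ((c:ℂ) * 1)) / ((1 + (c:ℂ) * 0) ^ 2)) 0 := by
    exact HasDerivAt.div ((hasDerivAt_id (0:ℂ)).add_const _)
      (((hasDerivAt_id (0:ℂ)).const_mul (c:ℂ)).const_add 1) hden
  have hg : HasDerivAt (fun z : ℂ => z * ((z + (c:ℂ)) / (1 + (c:ℂ) * z))) (c:ℂ) 0 := by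
    have := (hasDerivAt_id (0:ℂ)).mul hq
    refine this.congr_deriv ?_
    simp
  have hgden1 : (1 : ℂ) - (0:ℂ) * (((0:ℂ) + c) / (1 + (c:ℂ) * 0)) ≠ 0 := by norm_num
  have hgden2 : (1 : ℂ) + (0:ℂ) * (((0:ℂ) + c) / (1 + (c:ℂ) * 0)) ≠ 0 := by norm_num
  have hf1 : HasDerivAt (fun z : ℂ => (1 + z * ((z + (c:ℂ)) / (1 + (c:ℂ) * z))) /
      (1 - z * ((z + (c:ℂ)) / (1 + (c:ℂ) * z)))) ((2 * c : ℝ) : ℂ) 0 := by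
    have := HasDerivAt.div (hg.const_add 1) ((hasDerivAt_const (0:ℂ) 1).sub hg) hgden1
    refine this.congr_deriv ?_
    simp
    ring
  have hf2 : HasDerivAt (fun z : ℂ => (1 - z * ((z + (c:ℂ)) / (1 + (c:ℂ) * z))) /
      (1 + z * ((z + (c:ℂ)) / (1 + (c:ℂ) * z)))) (-((2 * c : ℝ) : ℂ)) 0 := by
    have := HasDerivAt.div ((hasDerivAt_const (0:ℂ) 1).sub hg) (hg.const_add 1) hgden2
    refine this.congr_deriv ?_
    simp
    ring
  have hU₁ : u₁ = fun z => ((1 + z * ((z + (c:ℂ)) / (1 + (c:ℂ) * z))) /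
      (1 - z * ((z + (c:ℂ)) / (1 + (c:ℂ) * z)))).re := funext hu₁
  have hU₂ : u₂ = fun z => ((1 - z * ((z + (c:ℂ)) / (1 + (c:ℂ) * z))) /
      (1 + z * ((z + (c:ℂ)) / (1 + (c:ℂ) * z)))).re := funext hu₂
  have hgrad1 : gradient u₁ 0 = ((2 * c : ℝ) : ℂ) := by
    rw [hU₁]
    have := (re_hasGradientAt hf1).gradient
    rwa [Complex.conj_ofReal] at this
  have hgrad2 : gradient u₂ 0 = -((2 * c : ℝ) : ℂ) := by
    rw [hU₂]
    have := (re_hasGradientAt hf2).gradient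
    rwa [map_neg, Complex.conj_ofReal] at this
  refine ⟨?_, ?_, ?_, ?_, ?_⟩
  · intro x hx0 hx1
    have hcx : (1 : ℂ) + (c:ℂ) * (x:ℂ) ≠ 0 := by
      have : (0:ℝ) < 1 + c * x := by positivity
      intro h
      norm_cast at h
      linarith
    have hx2 : (1 : ℂ) - (x:ℂ) ^ 2 ≠ 0 := by
      have h2 : (0:ℝ) < 1 - x ^ 2 := by nlinarith
      intro h
      norm_cast at h
      nlinarith
    have hsum : (1 : ℂ) + (x:ℂ) ^ 2 + 2 * (c:ℂ) * (x:ℂ) ≠ 0 := by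
      have h2 : (0:ℝ) < 1 + x ^ 2 + 2 * c * x := by positivity
      intro h
      norm_cast at h
      nlinarith
    have e1 : (1 : ℂ) - (x:ℂ) * (((x:ℂ) + (c:ℂ)) / (1 + (c:ℂ) * (x:ℂ))) =
        ((1 : ℂ) - (x:ℂ)^2) / (1 + (c:ℂ) * (x:ℂ)) := by
      rw [eq_div_iff hcx]
      have hq' : ((x:ℂ) + (c:ℂ)) / (1 + (c:ℂ) * (x:ℂ)) * (1 + (c:ℂ) * (x:ℂ)) = (x:ℂ) + (c:ℂ) :=
        div_mul_cancel₀ _ hcx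
      linear_combination (-(x:ℂ)) * hq'
    have e2 : (1 : ℂ) + (x:ℂ) * (((x:ℂ) + (c:ℂ)) / (1 + (c:ℂ) * (x:ℂ))) =
        ((1 : ℂ) + (x:ℂ)^2 + 2 * (c:ℂ) * (x:ℂ)) / (1 + (c:ℂ) * (x:ℂ)) := by
      rw [eq_div_iff hcx]
      have hq' : ((x:ℂ) + (c:ℂ)) / (1 + (c:ℂ) * (x:ℂ)) * (1 + (c:ℂ) * (x:ℂ)) = (x:ℂ) + (c:ℂ) :=
        div_mul_cancel₀ _ hcx
      linear_combination (x:ℂ) * hq'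
    constructor
    · have key : (1 + (x:ℂ) * (((x:ℂ) + (c:ℂ)) / (1 + (c:ℂ) * (x:ℂ)))) /
          (1 - (x:ℂ) * (((x:ℂ) + (c:ℂ)) / (1 + (c:ℂ) * (x:ℂ)))) =
          (((1 + x ^ 2 + 2 * c * x) / (1 - x ^ 2) : ℝ) : ℂ) := by
        rw [e1, e2]
        push_cast
        have hcx' : (1 : ℂ) + (x:ℂ) * (c:ℂ) ≠ 0 := by rwa [mul_comm] at hcx
        field_simp
      rw [key, Complex.ofReal_re]
    · have h2 : (0:ℝ) < 1 - x ^ 2 := by nlinarith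
      have h3 : (0:ℝ) < 1 + x ^ 2 + 2 * c * x := by positivity
      have key : (1 - (x:ℂ) * (((x:ℂ) + (c:ℂ)) / (1 + (c:ℂ) * (x:ℂ)))) /
          (1 + (x:ℂ) * (((x:ℂ) + (c:ℂ)) / (1 + (c:ℂ) * (x:ℂ)))) =
          (((1 - x ^ 2) / (1 + x ^ 2 + 2 * c * x) : ℝ) : ℂ) := by
        rw [e1, e2]
        push_cast
        have hcx' : (1 : ℂ) + (x:ℂ) * (c:ℂ) ≠ 0 := by rwa [mul_comm] at hcx
        field_simp
      rw [key, Complex.ofReal_re, inv_div]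
  · rw [hu₁ 0]; norm_num
  · rw [hu₂ 0]; norm_num
  · rw [hgrad1, Complex.norm_real]
    exact abs_of_nonneg (by positivity)
  · rw [hgrad2, norm_neg, Complex.norm_real]
    exact abs_of_nonneg (by positivity)
end

section
/- (Beardon–Carne inequality, half-plane instance) Let f : 𝕌 → ℂ be holomorphic with Re f(z) > 0 for all z ∈ 𝕌, and set c = |f′(0)| / (2 · Re f(0)). Then for every z ∈ 𝕌, arcosh( 1 + |f(z) − f(0)|² / (2 · Re f(z) · Re f(0)) ) ≤ log( (1 + |z|² + 2c|z|) / (1 − |z|²) ). -/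
open Metric Complex Set

lemma quad_bound {m β r x : ℝ} (hm1 : m ≤ 1) (hβ0 : 0 ≤ β) (hβ1 : β ≤ 1)
    (hr0 : 0 ≤ r) (hr1 : r < 1) (hx : x ≤ β * m)
    (hq : m^2 + β^2 - 2*x ≤ r^2*(1 - 2*x + β^2*m^2)) : m*(1+β*r) ≤ β + r := by
  by_contra hcon
  push_neg at hcon
  have hβr : 0 < 1 + β*r := by positivity
  have hβr' : 0 < 1 - β*r := by nlinarith
  have h1 : (β + r) * (1 - β*r) ≥ (β - r) * (1 + β*r) := by
    nlinarith [mul_nonneg hr0 (mul_nonneg (sub_nonneg.2 hβ1) (by linarith : (0:ℝ) ≤ 1 + β))]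
  have h2 : m * (1 - β*r) > β - r := by nlinarith [mul_pos hβr' hβr]
  have hprod : (m*(1+β*r) - (β+r)) * (m*(1-β*r) - (β-r)) > 0 :=
    mul_pos (by linarith) (by linarith)
  have hq2 : m^2*(1-r^2*β^2) + β^2 - r^2 ≤ 2*(β*m)*(1-r^2) := by
    nlinarith [mul_nonneg (sub_nonneg.2 hx) (by nlinarith : (0:ℝ) ≤ 1 - r^2)]
  nlinarith [hprod, hq2]

lemma schwarz_sharp {g : ℂ → ℂ} (hg : DifferentiableOn ℂ g (ball (0:ℂ) 1))
    (hmaps : ∀ w ∈ ball (0:ℂ) 1, ‖g w‖ < 1) (hg0 : g 0 = 0)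
    {z : ℂ} (hz : z ∈ ball (0:ℂ) 1) :
    ‖g z‖ * (1 + ‖deriv g 0‖ * ‖z‖)
      ≤ ‖z‖ * (‖z‖ + ‖deriv g 0‖) := by
  have h01 : (0:ℂ) ∈ ball (0:ℂ) 1 := mem_ball_self one_pos
  set h : ℂ → ℂ := dslope g 0 with hhdef
  have hmapsTo : MapsTo g (ball (0:ℂ) 1) (ball (g 0) 1) := by
    intro w hw
    rw [hg0, mem_ball_zero_iff]
    exact hmaps w hw
  have hh_le : ∀ w ∈ ball (0:ℂ) 1, ‖h w‖ ≤ 1 := by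
    intro w hw
    have := Complex.norm_dslope_le_div_of_mapsTo_ball hg (hmapsTo.mono_right ball_subset_closedBall) hw
    simpa using this
  have hdh : DifferentiableOn ℂ h (ball (0:ℂ) 1) :=
    (differentiableOn_dslope (ball_mem_nhds _ one_pos)).mpr hg
  set b : ℂ := h 0 with hbdef
  have hb_deriv : b = deriv g 0 := dslope_same g 0
  set β := ‖deriv g 0‖ with hβdef
  have habsb : ‖b‖ = β := by rw [hb_deriv]
  have hβ0 : 0 ≤ β := norm_nonneg _
  have hβ1 : β ≤ 1 := by rw [← habsb]; exact hh_le 0 h01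
  set r := ‖z‖ with hrdef
  have hr0 : 0 ≤ r := norm_nonneg _
  have hr1 : r < 1 := by
    have := mem_ball_zero_iff.mp hz
    simpa using this
  rcases eq_or_ne z 0 with rfl | hzz
  · simp [hg0]
    positivity
  have hgz : g z = z * h z := by
    have := sub_smul_dslope g 0 z
    rw [sub_zero, smul_eq_mul, hg0, sub_zero] at this
    exact this.symm
  have hm1 : ‖h z‖ ≤ 1 := hh_le z hz
  set m := ‖h z‖ with hmdef
  have hm0 : 0 ≤ m := norm_nonneg _
  have main : m * (1 + β * r) ≤ β + r := by
    rcases lt_or_ge β 1 with hβlt | hβge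
    · -- Möbius trick
      set k : ℂ → ℂ := fun w => (h w - b) / (1 - (starRingEnd ℂ) b * h w) with hkdef
      have hkden : ∀ w ∈ ball (0:ℂ) 1, (1:ℂ) - (starRingEnd ℂ) b * h w ≠ 0 := by
        intro w hw h0
        have h1 : ‖(starRingEnd ℂ) b * h w‖ ≤ β := by
          rw [norm_mul, Complex.norm_conj, habsb]
          calc β * ‖h w‖ ≤ β * 1 :=
                mul_le_mul_of_nonneg_left (hh_le w hw) hβ0
            _ = β := mul_one β
        have h2 : (starRingEnd ℂ) b * h w = 1 := (sub_eq_zero.mp h0).symm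
        rw [h2] at h1
        simp at h1
        linarith
      have hkdenpos : ∀ w ∈ ball (0:ℂ) 1,
          0 < ‖1 - (starRingEnd ℂ) b * h w‖ :=
        fun w hw => norm_pos_iff.mpr (hkden w hw)
      have hkdiff : DifferentiableOn ℂ k (ball (0:ℂ) 1) := by
        apply DifferentiableOn.div
        · exact hdh.sub (differentiableOn_const b)
        · exact (differentiableOn_const (1:ℂ)).sub
            ((differentiableOn_const _).mul hdh)
        · exact hkden
      have hk0 : k 0 = 0 := by simp [hkdef, ← hbdef]
      have key_ineq : ∀ u : ℂ, ‖u‖ ≤ 1 →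
          ‖u - b‖ ≤ ‖1 - (starRingEnd ℂ) b * u‖ := by
        intro u hu
        have e1 : ‖u - b‖^2 = normSq u + normSq b
            - 2 * (u * (starRingEnd ℂ) b).re := by
          rw [Complex.sq_norm, Complex.normSq_sub]
        have e2 : ‖1 - (starRingEnd ℂ) b * u‖^2 =
            1 + normSq b * normSq u - 2 * (u * (starRingEnd ℂ) b).re := by
          rw [Complex.sq_norm]
          simp only [Complex.normSq_apply, Complex.sub_re, Complex.sub_im, Complex.mul_re,
            Complex.mul_im, Complex.conj_re, Complex.conj_im, Complex.one_re, Complex.one_im]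
          ring
        have hnsb : normSq b ≤ 1 := by
          rw [← Complex.sq_norm, habsb]; nlinarith
        have hnsu : normSq u ≤ 1 := by
          rw [← Complex.sq_norm]; nlinarith [norm_nonneg u]
        have hsq : ‖u - b‖^2 ≤ ‖1 - (starRingEnd ℂ) b * u‖^2 := by
          rw [e1, e2]
          nlinarith [mul_nonneg (sub_nonneg.2 hnsb) (sub_nonneg.2 hnsu)]
        exact le_of_pow_le_pow_left₀ two_ne_zero (norm_nonneg _) hsq
      have hkle : ∀ w ∈ ball (0:ℂ) 1, ‖k w‖ ≤ 1 := by
        intro w hw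
        rw [hkdef]
        simp only [norm_div]
        rw [div_le_one (hkdenpos w hw)]
        exact key_ineq (h w) (hh_le w hw)
      -- Schwarz with radius R > 1 and limit
      have hkz : ‖k z‖ ≤ r := by
        have hstep : ∀ R : ℝ, 1 < R → ‖k z‖ ≤ R * r := by
          intro R hR
          have hmapk : MapsTo k (ball (0:ℂ) 1) (ball (k 0) R) := by
            intro w hw
            rw [hk0, mem_ball_zero_iff]
            exact lt_of_le_of_lt (hkle w hw) hR
          have := Complex.dist_le_div_mul_dist_of_mapsTo_ball hkdiff (hmapk.mono_right ball_subset_closedBall) hz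
          rw [hk0, dist_zero_right, dist_zero_right, div_one] at this
          exact this
        by_contra hcon
        push_neg at hcon
        have hrpos : 0 < r := by
          rcases hr0.lt_or_eq with h | h
          · exact h
          · exfalso; exact hzz (by simpa [hrdef, eq_comm] using norm_eq_zero.mp h.symm)
        have hRgt : 1 < (r + ‖k z‖) / (2*r) := by
          rw [lt_div_iff₀ (by linarith)]
          linarith
        have := hstep _ hRgt
        rw [div_mul_eq_mul_div, mul_comm, ← div_mul_eq_mul_div] at this
        have : ‖k z‖ ≤ (r + ‖k z‖) / 2 := by
          calc ‖k z‖ ≤ (r + ‖k z‖) / (2*r) * r := by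
                have := hstep _ hRgt; linarith
            _ = (r + ‖k z‖) / 2 := by field_simp
        linarith
      -- extract the inequality |h z - b| ≤ r * |1 - conj b * h z|
      have habs_ineq : ‖h z - b‖ ≤
          r * ‖1 - (starRingEnd ℂ) b * h z‖ := by
        have := hkz
        rw [hkdef] at this
        simp only [norm_div] at this
        rw [div_le_iff₀ (hkdenpos z hz)] at this
        linarith [this]
      -- now apply quad_bound with x = (h z * conj b).re
      set x := (h z * (starRingEnd ℂ) b).re with hxdef
      have hx : x ≤ β * m := by
        calc x ≤ ‖h z * (starRingEnd ℂ) b‖ := Complex.re_le_norm _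
          _ = m * β := by rw [norm_mul, Complex.norm_conj, habsb]
          _ = β * m := mul_comm _ _
      have hq : m^2 + β^2 - 2*x ≤ r^2*(1 - 2*x + β^2*m^2) := by
        have hsq : ‖h z - b‖^2 ≤
            (r * ‖1 - (starRingEnd ℂ) b * h z‖)^2 := by
          apply pow_le_pow_left₀ (norm_nonneg _) habs_ineq
        have e1 : ‖h z - b‖^2 = m^2 + β^2 - 2*x := by
          rw [hmdef, ← habsb, hxdef, Complex.sq_norm, Complex.sq_norm, Complex.sq_norm,
            Complex.normSq_sub]
        have e2 : ‖1 - (starRingEnd ℂ) b * h z‖^2 = 1 - 2*x + β^2*m^2 := by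
          rw [hmdef, ← habsb, hxdef, Complex.sq_norm, Complex.sq_norm, Complex.sq_norm]
          simp only [Complex.normSq_apply, Complex.sub_re, Complex.sub_im, Complex.mul_re,
            Complex.mul_im, Complex.conj_re, Complex.conj_im, Complex.one_re, Complex.one_im]
          ring
        rw [e1] at hsq
        rw [mul_pow, e2] at hsq
        nlinarith [hsq]
      exact quad_bound hm1 hβ0 hβ1 hr0 hr1 hx hq
    · have hβeq : β = 1 := le_antisymm hβ1 hβge
      rw [hβeq]
      nlinarith
  calc ‖g z‖ * (1 + β * r) = r * m * (1 + β * r) := by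
        rw [hgz, norm_mul]
    _ ≤ r * (β + r) := by
        rw [mul_assoc]
        exact mul_le_mul_of_nonneg_left main hr0
    _ = r * (r + β) := by ring

/-- The inverse hyperbolic cosine. -/
noncomputable def arcosh (x : ℝ) : ℝ := Real.log (x + Real.sqrt (x ^ 2 - 1))

/-- Beardon–Carne inequality for holomorphic maps of the unit disc into the
right half-plane. -/
theorem beardon_carne_halfplane (f : ℂ → ℂ)
    (hf : DifferentiableOn ℂ f (Metric.ball (0:ℂ) 1))
    (hre : ∀ z ∈ Metric.ball (0:ℂ) 1, 0 < (f z).re)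
    (c : ℝ) (hc : c = ‖deriv f 0‖ / (2 * (f 0).re))
    (z : ℂ) (hz : z ∈ Metric.ball (0:ℂ) 1) :
    arcosh (1 + ‖f z - f 0‖ ^ 2 / (2 * (f z).re * (f 0).re)) ≤
      Real.log ((1 + ‖z‖ ^ 2 + 2 * c * ‖z‖) /
        (1 - ‖z‖ ^ 2)) := by
  have h01 : (0:ℂ) ∈ ball (0:ℂ) 1 := mem_ball_self one_pos
  set a := f 0 with ha
  have hra : 0 < a.re := hre 0 h01
  have hden : ∀ w ∈ ball (0:ℂ) 1, f w + (starRingEnd ℂ) a ≠ 0 := by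
    intro w hw h0
    have h1 : (f w + (starRingEnd ℂ) a).re = (f w).re + a.re := by
      simp [Complex.add_re, Complex.conj_re]
    rw [h0] at h1
    simp at h1
    have := hre w hw
    linarith
  set g : ℂ → ℂ := fun w => (f w - a) / (f w + (starRingEnd ℂ) a) with hgdef
  have hg : DifferentiableOn ℂ g (ball (0:ℂ) 1) :=
    (hf.sub (differentiableOn_const a)).div
      (hf.add (differentiableOn_const _)) hden
  have hg0 : g 0 = 0 := by simp [hgdef, ← ha]
  have hns : ∀ w : ℂ, Complex.normSq (w + (starRingEnd ℂ) a) =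
      Complex.normSq (w - a) + 4 * w.re * a.re := by
    intro w
    simp [Complex.normSq_apply, Complex.add_re, Complex.add_im, Complex.sub_re,
      Complex.sub_im, Complex.conj_re, Complex.conj_im]
    ring
  have habslt : ∀ w ∈ ball (0:ℂ) 1, ‖g w‖ < 1 := by
    intro w hw
    have h1 : ‖f w - a‖ < ‖f w + (starRingEnd ℂ) a‖ := by
      have h2 := hns (f w)
      have hw' := hre w hw
      rw [Complex.norm_def, Complex.norm_def]
      apply Real.sqrt_lt_sqrt (Complex.normSq_nonneg _)
      nlinarith
    rw [hgdef]
    simp only [norm_div]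
    rw [div_lt_one (norm_pos_iff.mpr (hden w hw))]
    exact h1
  -- derivative of g at 0
  have hfd : DifferentiableAt ℂ f 0 := hf.differentiableAt (isOpen_ball.mem_nhds h01)
  have h1 : HasDerivAt f (deriv f 0) 0 := hfd.hasDerivAt
  have e0 : f 0 - a = 0 := by rw [← ha, sub_self]
  have e : f 0 + (starRingEnd ℂ) a = ((2*a.re : ℝ) : ℂ) := by
    rw [← ha, Complex.add_conj]
  have h2ne : ((2*a.re : ℝ) : ℂ) ≠ 0 := by
    simp only [ne_eq, Complex.ofReal_eq_zero]
    positivity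
  have hderiv : deriv g 0 = deriv f 0 / ((2*a.re : ℝ) : ℂ) := by
    have h4 := ((h1.sub_const a).div (h1.add_const ((starRingEnd ℂ) a)) (hden 0 h01)).deriv
    rw [hgdef]
    erw [h4]
    rw [e0, e, zero_mul, sub_zero, pow_two, mul_div_assoc,
      div_mul_cancel_left₀ h2ne]
    rw [div_eq_mul_inv]
  have habsderiv : ‖deriv g 0‖ = c := by
    rw [hderiv, norm_div, Complex.norm_real, Real.norm_eq_abs, abs_of_pos (by positivity), hc]
  have key := schwarz_sharp hg habslt hg0 hz
  rw [habsderiv] at key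
  set r := ‖z‖ with hrdef
  have hr0 : 0 ≤ r := norm_nonneg _
  have hr1 : r < 1 := by
    have := mem_ball_zero_iff.mp hz
    simpa using this
  have hc0 : 0 ≤ c := by rw [hc]; positivity
  set s := ‖g z‖ with hsdef
  have hs0 : 0 ≤ s := norm_nonneg _
  have hs1 : s < 1 := habslt z hz
  have hru : 0 < (f z).re := hre z hz
  -- the identity for the argument of arcosh
  have hD : Complex.normSq (f z + (starRingEnd ℂ) a) =
      Complex.normSq (f z - a) + 4*(f z).re*a.re := by
    have := hns (f z); linarith
  have hNnn : 0 ≤ Complex.normSq (f z - a) := Complex.normSq_nonneg _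
  have hs2 : s^2 * (Complex.normSq (f z - a) + 4*(f z).re*a.re) =
      Complex.normSq (f z - a) := by
    rw [hsdef, hgdef]
    simp only [norm_div]
    rw [div_pow, Complex.sq_norm, Complex.sq_norm, hD]
    rw [div_mul_cancel₀]
    positivity
  have hiden : 1 + ‖f z - a‖^2/(2*(f z).re*a.re) = (1+s^2)/(1-s^2) := by
    rw [Complex.sq_norm]
    set N := Complex.normSq (f z - a) with hNdef
    have h1s : 1 - s^2 > 0 := by nlinarith
    field_simp
    nlinarith [hs2]
  have harc : arcosh ((1+s^2)/(1-s^2)) = Real.log ((1+s)/(1-s)) := by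
    have h1s : (0:ℝ) < 1 - s^2 := by nlinarith
    unfold arcosh
    have hsq : ((1+s^2)/(1-s^2))^2 - 1 = (2*s/(1-s^2))^2 := by
      field_simp
      ring
    rw [hsq, Real.sqrt_sq (by positivity)]
    congr 1
    rw [← add_div]
    rw [div_eq_div_iff (by positivity) (by nlinarith)]
    ring
  have hfinal : (1+s)/(1-s) ≤ (1 + r^2 + 2*c*r)/(1 - r^2) := by
    rw [div_le_div_iff₀ (by linarith) (by nlinarith)]
    nlinarith [key]
  calc arcosh (1 + ‖f z - a‖ ^ 2 / (2 * (f z).re * a.re))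
      = Real.log ((1+s)/(1-s)) := by rw [hiden, harc]
    _ ≤ Real.log ((1 + r^2 + 2*c*r)/(1 - r^2)) := by
        exact Real.log_le_log (div_pos (by linarith) (by linarith)) hfinal
    _ = Real.log ((1 + r ^ 2 + 2 * c * r) / (1 - r ^ 2)) := rfl
end
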